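/- Let E be an n-dimensional real inner product space, let ᾱ_0, ᾱ_1, …, ᾱ_n be nonzero vectors of E such that ᾱ_1, …, ᾱ_n form a basis of E, and let k_0, …, k_n be positive real numbers with k_0·ᾱ_0 + k_1·ᾱ_1 + ⋯ + k_n·ᾱ_n = 0. For each index e ∈ {0, 1, …, n}, the set {ᾱ_j : j ≠ e} is a basis of E, and one may define the fundamental weights relative to e as the unique vectors (ω^{(e)}_f)_{f ≠ e} satisfying ⟨ω^{(e)}_f, ᾱ_j^∨⟩ = δ_{fj} for all f, j ∈ {0,…,n}∖{e}, where ᾱ^∨ := 2ᾱ/‖ᾱ‖². Then for every e ∈ {1, …, n}: (a) ω^{(e)}_0 = −(k_0‖ᾱ_0‖²)/(k_e‖ᾱ_e‖²) · ω^{(0)}_e, and ω^{(e)}_f = ω^{(0)}_f − (k_f‖ᾱ_f‖²)/(k_e‖ᾱ_e‖²) · ω^{(0)}_e for all f ∈ {1,…,n}∖{e}; (b) conversely, ω^{(0)}_e = −(k_e‖ᾱ_e‖²)/(k_0‖ᾱ_0‖²) · ω^{(e)}_0, and ω^{(0)}_f = ω^{(e)}_f − (k_f‖ᾱ_f‖²)/(k_0‖ᾱ_0‖²)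 · ω^{(e)}_0 for all f ∈ {1,…,n}∖{e}. -/

import Mathlib

open RealInnerProductSpace

/-- Change of fundamental weights between two vertices of the alcove of an affine
root system.  Here `E` is an `n`-dimensional real inner product space, the gradients
`ᾱ_0, …, ᾱ_n` are nonzero with `ᾱ_1, …, ᾱ_n` a basis, and `∑ k_i ᾱ_i = 0` with all
`k_i > 0`.  For each vertex `e` the family `{ᾱ_j : j ≠ e}` is linearly independent
(hence a basis), and the fundamental weights `ω^{(e)}_f` (characterized by
`⟨ω^{(e)}_f, ᾱ_j^∨⟩ = δ_{fj}` for `f, j ≠ e`, with `ᾱ^∨ = (2/‖ᾱ‖²)ᾱ`) transform as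
stated. -/
theorem fundamental_weights_change_of_vertex
    {E : Type*} [NormedAddCommGroup E] [InnerProductSpace ℝ E]
    (n : ℕ) (hdim : Module.finrank ℝ E = n)
    (α : Fin (n + 1) → E) (hα : ∀ i, α i ≠ 0)
    (hbasis : LinearIndependent ℝ (fun i : Fin n => α i.succ))
    (k : Fin (n + 1) → ℝ) (hk : ∀ i, 0 < k i)
    (hrel : ∑ i, k i • α i = 0)
    (e : Fin (n + 1)) (he : e ≠ 0)
    (ω0 ωe : Fin (n + 1) → E)
    (hω0 : ∀ f j : Fin (n + 1), f ≠ 0 → j ≠ 0 →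
      ⟪ω0 f, (2 / ‖α j‖ ^ 2) • α j⟫ = if f = j then 1 else 0)
    (hωe : ∀ f j : Fin (n + 1), f ≠ e → j ≠ e →
      ⟪ωe f, (2 / ‖α j‖ ^ 2) • α j⟫ = if f = j then 1 else 0) :
    (∀ e' : Fin (n + 1),
      LinearIndependent ℝ (fun j : {j : Fin (n + 1) // j ≠ e'} => α j)) ∧
    ωe 0 = (-(k 0 * ‖α 0‖ ^ 2) / (k e * ‖α e‖ ^ 2)) • ω0 e ∧
    (∀ f : Fin (n + 1), f ≠ 0 → f ≠ e →
      ωe f = ω0 f - ((k f * ‖α f‖ ^ 2) / (k e * ‖α e‖ ^ 2)) • ω0 e) ∧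
    ω0 e = (-(k e * ‖α e‖ ^ 2) / (k 0 * ‖α 0‖ ^ 2)) • ωe 0 ∧
    (∀ f : Fin (n + 1), f ≠ 0 → f ≠ e →
      ω0 f = ωe f - ((k f * ‖α f‖ ^ 2) / (k 0 * ‖α 0‖ ^ 2)) • ωe 0) := by
  -- the case n = 0 is impossible
  rcases Nat.eq_zero_or_pos n with h0 | hpos
  · exfalso
    subst h0
    have : k 0 • α 0 = 0 := by simpa using hrel
    rcases smul_eq_zero.mp this with h | h
    · exact (hk 0).ne' h
    · exact hα 0 h
  haveI : Nonempty (Fin n) := ⟨⟨0, hpos⟩⟩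
  have hnorm : ∀ i, (‖α i‖ : ℝ) ^ 2 ≠ 0 := fun i =>
    pow_ne_zero _ (norm_ne_zero_iff.mpr (hα i))
  have hke : k e ≠ 0 := (hk e).ne'
  have hk0 : k 0 ≠ 0 := (hk 0).ne'
  -- span of the basis family is the whole space
  have hcard : Fintype.card (Fin n) = Module.finrank ℝ E := by simp [hdim]
  have hspan : Submodule.span ℝ (Set.range fun i : Fin n => α i.succ) = ⊤ :=
    hbasis.span_eq_top_of_card_eq_finrank hcard
  -- a vector is determined by its inner products against α j, j ≠ 0
  have key : ∀ v w : E, (∀ j : Fin (n+1), j ≠ 0 → ⟪v, α j⟫ = ⟪w, α j⟫) → v = w := by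
    intro v w h
    have h0 : ∀ y ∈ Submodule.span ℝ (Set.range fun i : Fin n => α i.succ),
        ⟪v - w, y⟫ = 0 := by
      intro y hy
      induction hy using Submodule.span_induction with
      | mem y hy =>
        obtain ⟨i, rfl⟩ := hy
        rw [inner_sub_left, h _ (Fin.succ_ne_zero i), sub_self]
      | zero => simp
      | add _ _ _ _ h1 h2 => rw [inner_add_right, h1, h2, add_zero]
      | smul a _ _ h1 => rw [real_inner_smul_right, h1, mul_zero]
    have := h0 (v - w) (by rw [hspan]; trivial)
    rwa [inner_self_eq_zero, sub_eq_zero] at this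
  -- the linear relation, dualized
  have hrel' : ∀ x : E, ∑ i, k i * ⟪x, α i⟫ = 0 := by
    intro x
    have := congrArg (fun y => (⟪x, y⟫ : ℝ)) hrel
    simpa [inner_sum, real_inner_smul_right] using this
  -- inner products of fundamental weights, cleaned up
  have clean : ∀ (ω : Fin (n+1) → E) (e' : Fin (n+1)),
      (∀ f j : Fin (n + 1), f ≠ e' → j ≠ e' →
        ⟪ω f, (2 / ‖α j‖ ^ 2) • α j⟫ = if f = j then 1 else 0) →
      ∀ f j : Fin (n+1), f ≠ e' → j ≠ e' →
        ⟪ω f, α j⟫ = if f = j then ‖α j‖ ^ 2 / 2 else 0 := by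
    intro ω e' hω f j hf hj
    have h := hω f j hf hj
    rw [real_inner_smul_right] at h
    rcases eq_or_ne f j with rfl | hne
    · rw [if_pos rfl] at h ⊢
      field_simp at h
      rw [div_eq_one_iff_eq (hnorm f)] at h
      linarith
    · rw [if_neg hne] at h ⊢
      have h2 : (2 : ℝ) / ‖α j‖ ^ 2 ≠ 0 := div_ne_zero two_ne_zero (hnorm j)
      exact (mul_eq_zero.mp h).resolve_left h2
  -- the missing inner product against α e'
  have miss : ∀ (ω : Fin (n+1) → E) (e' : Fin (n+1)),
      (∀ f j : Fin (n + 1), f ≠ e' → j ≠ e' →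
        ⟪ω f, (2 / ‖α j‖ ^ 2) • α j⟫ = if f = j then 1 else 0) →
      ∀ f : Fin (n+1), f ≠ e' →
        ⟪ω f, α e'⟫ = -(k f * ‖α f‖ ^ 2) / (2 * k e') := by
    intro ω e' hω f hf
    have hs := hrel' (ω f)
    have hterm : ∀ i : Fin (n+1), k i * ⟪ω f, α i⟫ =
        if i = e' then k e' * ⟪ω f, α e'⟫
        else (if f = i then k f * (‖α f‖ ^ 2 / 2) else 0) := by
      intro i
      rcases eq_or_ne i e' with rfl | hi
      · simp
      · rw [if_neg hi, clean ω e' hω f i hf hi]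
        rcases eq_or_ne f i with rfl | hfi
        · simp
        · simp [hfi]
    rw [Finset.sum_congr rfl (fun i _ => hterm i),
      ← Finset.add_sum_erase _ _ (Finset.mem_univ e'), if_pos rfl,
      Finset.sum_congr rfl (fun i hi => if_neg (Finset.ne_of_mem_erase hi)),
      Finset.sum_ite_eq,
      if_pos (Finset.mem_erase.mpr ⟨hf, Finset.mem_univ f⟩)] at hs
    have hke' : k e' ≠ 0 := (hk e').ne'
    field_simp
    linarith
  have h0e : (0 : Fin (n+1)) ≠ e := Ne.symm he
  -- part (a), first formula
  have G2 : ωe 0 = (-(k 0 * ‖α 0‖ ^ 2) / (k e * ‖α e‖ ^ 2)) • ω0 e := by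
    apply key
    intro j hj
    rw [real_inner_smul_left]
    rcases eq_or_ne j e with hje | hje
    · rw [hje, miss ωe e hωe 0 h0e, clean ω0 0 hω0 e e he he, if_pos rfl]
      rw [div_mul_eq_mul_div, div_eq_div_iff (by positivity) (mul_ne_zero hke (hnorm e))]
      ring
    · rw [clean ωe e hωe 0 j h0e hje, if_neg (Ne.symm hj),
        clean ω0 0 hω0 e j he hj, if_neg (Ne.symm hje), mul_zero]
  -- part (a), second formula
  have G3 : ∀ f : Fin (n + 1), f ≠ 0 → f ≠ e →
      ωe f = ω0 f - ((k f * ‖α f‖ ^ 2) / (k e * ‖α e‖ ^ 2)) • ω0 e := by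
    intro f hf0 hfe
    apply key
    intro j hj
    rw [inner_sub_left, real_inner_smul_left]
    rcases eq_or_ne j e with hje | hje
    · rw [hje, miss ωe e hωe f hfe, clean ω0 0 hω0 f e hf0 he, if_neg hfe,
        clean ω0 0 hω0 e e he he, if_pos rfl]
      rw [zero_sub, eq_comm, neg_eq_iff_eq_neg, neg_div, neg_neg, div_mul_eq_mul_div,
        div_eq_div_iff (mul_ne_zero hke (hnorm e)) (by positivity)]
      ring
    · rw [clean ωe e hωe f j hfe hje, clean ω0 0 hω0 f j hf0 hj,
        clean ω0 0 hω0 e j he hj, if_neg (Ne.symm hje), mul_zero, sub_zero]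
  -- part (b) by algebra
  have G4 : ω0 e = (-(k e * ‖α e‖ ^ 2) / (k 0 * ‖α 0‖ ^ 2)) • ωe 0 := by
    rw [G2, smul_smul]
    have : -(k e * ‖α e‖ ^ 2) / (k 0 * ‖α 0‖ ^ 2) *
        (-(k 0 * ‖α 0‖ ^ 2) / (k e * ‖α e‖ ^ 2)) = 1 := by
      field_simp [mul_ne_zero hk0 (hnorm 0), mul_ne_zero hke (hnorm e),
        norm_ne_zero_iff.mpr (hα 0), norm_ne_zero_iff.mpr (hα e)]
    rw [this, one_smul]
  have G5 : ∀ f : Fin (n + 1), f ≠ 0 → f ≠ e →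
      ω0 f = ωe f - ((k f * ‖α f‖ ^ 2) / (k 0 * ‖α 0‖ ^ 2)) • ωe 0 := by
    intro f hf0 hfe
    rw [G3 f hf0 hfe, G2, smul_smul, sub_sub, ← add_smul]
    have : k f * ‖α f‖ ^ 2 / (k e * ‖α e‖ ^ 2) +
        k f * ‖α f‖ ^ 2 / (k 0 * ‖α 0‖ ^ 2) *
          (-(k 0 * ‖α 0‖ ^ 2) / (k e * ‖α e‖ ^ 2)) = 0 := by
      field_simp [mul_ne_zero hk0 (hnorm 0), mul_ne_zero hke (hnorm e),
        norm_ne_zero_iff.mpr (hα 0), norm_ne_zero_iff.mpr (hα e)]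
      ring
    rw [this, zero_smul, sub_zero]
  -- linear independence of each subfamily
  have G1 : ∀ e' : Fin (n + 1),
      LinearIndependent ℝ (fun j : {j : Fin (n + 1) // j ≠ e'} => α j) := by
    intro e'
    have hcard' : Fintype.card {j : Fin (n + 1) // j ≠ e'} = n := by
      simp [Fintype.card_subtype_compl]
    apply linearIndependent_of_top_le_span_of_card_eq_finrank _ (by rw [hcard', hdim])
    -- every α i lies in the span of the subfamily
    have hmem : ∀ i : Fin (n+1),
        α i ∈ Submodule.span ℝ (Set.range fun j : {j : Fin (n + 1) // j ≠ e'} => α j) := by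
      intro i
      rcases eq_or_ne i e' with hie | hi
      · -- use the relation
        rw [hie]
        have hsum : k e' • α e' + ∑ j ∈ Finset.univ.erase e', k j • α j = 0 := by
          rw [Finset.add_sum_erase _ (fun j => k j • α j) (Finset.mem_univ e')]
          exact hrel
        have hmem' : ∑ j ∈ Finset.univ.erase e', k j • α j ∈
            Submodule.span ℝ (Set.range fun j : {j : Fin (n + 1) // j ≠ e'} => α j) := by
          apply Submodule.sum_mem
          intro j hj
          exact Submodule.smul_mem _ _
            (Submodule.subset_span ⟨⟨j, Finset.ne_of_mem_erase hj⟩, rfl⟩)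
        have h1 : k e' • α e' = -(∑ j ∈ Finset.univ.erase e', k j • α j) :=
          eq_neg_of_add_eq_zero_left hsum
        have : α e' = (k e')⁻¹ • (-(∑ j ∈ Finset.univ.erase e', k j • α j)) := by
          rw [← h1, inv_smul_smul₀ (hk e').ne']
        rw [this]
        exact Submodule.smul_mem _ _ (Submodule.neg_mem _ hmem')
      · exact Submodule.subset_span ⟨⟨i, hi⟩, rfl⟩
    rw [← hspan]
    apply Submodule.span_le.mpr
    rintro _ ⟨i, rfl⟩
    exact hmem _
  exact ⟨G1, G2, G3, G4, G5⟩
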